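/- Elementary lemma about the distance of sets (Lemma 'topo'). Let n ≥ 2 and m ≥ 0, let F₁,…,F_n ⊆ ℝ² be pairwise disjoint nonempty closed connected sets and R₁,…,R_m ⊆ ℝ² pairwise disjoint nonempty closed connected sets; set F = ⋃_{j=1}^n F_j and R = ⋃_{l=1}^m R_l. Let G ⊆ ℝ² be a closed, path-connected set with F ⊆ G, and let d > 0 be such that dist(x, F) ≤ d for all x ∈ G \ R. Then for each j ∈ {1,…,n} there exists k ∈ {1,…,n} with k ≠ j such that either (a) dist(F_j, F_k) ≤ 4d, or (b) there exists l ∈ {1,…,m} with dist(F_j, R_l) ≤ 4d and dist(F_k, R_l) ≤ 4d. (Here dist(A,B) = inf{|x − y| : x ∈ A, y ∈ B} and dist(x,A) = inf{|x − y| : y ∈ A}.) -/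

import Mathlib

open MeasureTheory Set
open scoped ENNReal NNReal

noncomputable section

/-- The Euclidean plane. -/
abbrev E2 := EuclideanSpace ℝ (Fin 2)

/-- The distance between two subsets of the plane,
`dist(A,B) = inf {|x - y| : x ∈ A, y ∈ B}` (valued in `ℝ≥0∞`). -/
def setDist (A B : Set E2) : ℝ≥0∞ := ⨅ a ∈ A, EMetric.infEdist a B

lemma infEdist_zero_of_mem' {x : E2} {s : Set E2} (h : x ∈ s) :
    EMetric.infEdist x s = 0 :=
  Metric.infEDist_zero_of_mem h

lemma setDist_le_add (x : E2) (A B : Set E2) :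
    setDist A B ≤ EMetric.infEdist x A + EMetric.infEdist x B := by
  have h1 : setDist A B ≤ ⨅ a ∈ A, (edist x a + EMetric.infEdist x B) := by
    refine iInf₂_mono fun a ha => ?_
    calc EMetric.infEdist a B ≤ edist a x + EMetric.infEdist x B :=
          EMetric.infEdist_le_edist_add_infEdist
      _ = edist x a + EMetric.infEdist x B := by rw [edist_comm]
  refine h1.trans (le_of_eq ?_)
  generalize EMetric.infEdist x B = c
  rw [EMetric.infEdist, Metric.infEDist]
  simp only [ENNReal.iInf_add]

lemma exists_index_le {n : ℕ} (hn : 0 < n) (F : Fin n → Set E2) (x : E2) (r : ℝ≥0∞)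
    (h : EMetric.infEdist x (⋃ j, F j) ≤ r) : ∃ i, EMetric.infEdist x (F i) ≤ r := by
  haveI : Nonempty (Fin n) := ⟨⟨0, hn⟩⟩
  obtain ⟨i, hi⟩ := Finite.exists_min (fun i => EMetric.infEdist x (F i))
  rw [EMetric.infEdist, Metric.infEDist_iUnion] at h
  exact ⟨i, (le_iInf hi).trans h⟩

lemma exists_junction {m : ℕ} (R : Fin m → Set E2) (hRcl : ∀ l, IsClosed (R l))
    (hRdisj : Pairwise (Function.onFun Disjoint R)) {C : Set E2} (hC : IsPreconnected C)
    {l l' : Fin m} (hll : l' ≠ l) {p q : E2} (hp : p ∈ C) (hpl : p ∈ R l)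
    (hq : q ∈ C) (hql : q ∈ R l') :
    ∃ y ∈ C, y ∉ ⋃ i, R i := by
  by_contra hcon
  push_neg at hcon
  have hsub : C ⊆ R l ∪ ⋃ i ∈ {i : Fin m | i ≠ l}, R i := by
    intro y hy
    obtain ⟨i, hi⟩ := mem_iUnion.mp (hcon y hy)
    by_cases h : i = l
    · exact Or.inl (h ▸ hi)
    · exact Or.inr (mem_biUnion h hi)
  obtain ⟨z, hzC, hz1, hz2⟩ := isPreconnected_closed_iff.mp hC _ _ (hRcl l)
    (Set.Finite.isClosed_biUnion (Set.toFinite _) fun i _ => hRcl i) hsub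
    ⟨p, hp, hpl⟩ ⟨q, hq, mem_biUnion hll hql⟩
  obtain ⟨i, hi, hzi⟩ := mem_iUnion₂.mp hz2
  exact Set.disjoint_left.mp (hRdisj hi) hzi hz1

/-- **Elementary lemma about the distance of sets** (Lemma 3.3 / "topo"). -/
theorem distance_of_sets (n m : ℕ) (hn : 2 ≤ n)
    (F : Fin n → Set E2) (R : Fin m → Set E2)
    (hFne : ∀ j, (F j).Nonempty) (hFcl : ∀ j, IsClosed (F j))
    (hFconn : ∀ j, IsConnected (F j))
    (hFdisj : Pairwise (Function.onFun Disjoint F))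
    (hRne : ∀ l, (R l).Nonempty) (hRcl : ∀ l, IsClosed (R l))
    (hRconn : ∀ l, IsConnected (R l))
    (hRdisj : Pairwise (Function.onFun Disjoint R))
    (G : Set E2) (hGcl : IsClosed G) (hGpath : IsPathConnected G)
    (hFG : (⋃ j, F j) ⊆ G)
    (d : ℝ) (hd : 0 < d)
    (hdist : ∀ x ∈ G \ ⋃ l, R l, EMetric.infEdist x (⋃ j, F j) ≤ ENNReal.ofReal d) :
    ∀ j, ∃ k, k ≠ j ∧
      (setDist (F j) (F k) ≤ ENNReal.ofReal (4 * d) ∨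
        ∃ l, setDist (F j) (R l) ≤ ENNReal.ofReal (4 * d) ∧
          setDist (F k) (R l) ≤ ENNReal.ofReal (4 * d)) := by
  intro j
  by_contra hcon
  push_neg at hcon
  -- hcon : ∀ k, k ≠ j → ¬ ≤ ∧ ∀ l, ≤ → ¬ ≤ (as <)
  set D4 := ENNReal.ofReal (4 * d) with hD4
  set D2 := ENNReal.ofReal (2 * d) with hD2
  set Dh := ENNReal.ofReal (d / 2) with hDh
  set D := ENNReal.ofReal d with hD
  set L : Set (Fin m) := {l | setDist (F j) (R l) ≤ D4} with hL
  set W : Set E2 := {x | EMetric.infEdist x (F j) ≤ D2} ∪ ⋃ l ∈ L, R l with hW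
  have hWcl : IsClosed W := by
    refine IsClosed.union ?_ (Set.Finite.isClosed_biUnion (Set.toFinite _) fun l _ => hRcl l)
    exact isClosed_le EMetric.continuous_infEdist continuous_const
  haveI : Nontrivial (Fin n) := Fin.nontrivial_iff_two_le.mpr hn
  obtain ⟨k0, hk0⟩ := exists_ne j
  obtain ⟨a, ha⟩ := hFne j
  obtain ⟨b, hb⟩ := hFne k0
  have haG : a ∈ G := hFG (mem_iUnion.mpr ⟨j, ha⟩)
  have hbG : b ∈ G := hFG (mem_iUnion.mpr ⟨k0, hb⟩)
  obtain ⟨γ, hγG⟩ := (hGpath.joinedIn a haG b hbG)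
  set A : Set unitInterval := (⇑γ) ⁻¹' W with hA
  have hAcl : IsClosed A := hWcl.preimage γ.continuous
  -- key facts about ∉ W for a point of G
  have hnear : ∀ x : E2, x ∈ G → x ∉ (⋃ i, R i) → ∃ i, EMetric.infEdist x (F i) ≤ D := by
    intro x hxG hxR
    exact exists_index_le (by omega) F x D (hdist x ⟨hxG, hxR⟩)
  have hDD2 : D ≤ D2 := ENNReal.ofReal_le_ofReal (by linarith)
  have hAopen : IsOpen A := by
    rw [Metric.isOpen_iff]
    intro t htA
    have hc : ContinuousAt (⇑γ) t := γ.continuous.continuousAt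
    rw [Metric.continuousAt_iff] at hc
    obtain ⟨δ, hδ, hball⟩ := hc (d / 2) (by linarith)
    refine ⟨δ, hδ, fun s hs => ?_⟩
    rw [Metric.mem_ball] at hs
    by_contra hsA
    have hx : γ s ∉ W := hsA
    rw [hW, mem_union, not_or] at hx
    obtain ⟨hx1, hx2⟩ := hx
    rw [mem_setOf_eq, not_le] at hx1
    have hest : edist (γ s) (γ t) < Dh := by
      rw [hDh, edist_lt_ofReal]
      exact hball hs
    have htW : γ t ∈ W := htA
    rw [hW, mem_union] at htW
    rcases htW with ht1 | ht2
    · -- case 1 : γ t within 2d of F j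
      rw [mem_setOf_eq] at ht1
      have hxFj : EMetric.infEdist (γ s) (F j) ≤ Dh + D2 := by
        calc EMetric.infEdist (γ s) (F j)
            ≤ edist (γ s) (γ t) + EMetric.infEdist (γ t) (F j) :=
              EMetric.infEdist_le_edist_add_infEdist
          _ ≤ Dh + D2 := add_le_add hest.le ht1
      by_cases hxR : γ s ∈ ⋃ i, R i
      · obtain ⟨l', hl'⟩ := mem_iUnion.mp hxR
        have : setDist (F j) (R l') ≤ D4 := by
          calc setDist (F j) (R l')
              ≤ EMetric.infEdist (γ s) (F j) + EMetric.infEdist (γ s) (R l') :=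
                setDist_le_add _ _ _
            _ = EMetric.infEdist (γ s) (F j) + 0 := by
                rw [infEdist_zero_of_mem' hl']
            _ ≤ (Dh + D2) + 0 := by gcongr
            _ ≤ D4 := by
                rw [hDh, hD2, hD4, add_zero, ← ENNReal.ofReal_add (by linarith) (by linarith)]
                exact ENNReal.ofReal_le_ofReal (by linarith)
        exact hx2 (mem_biUnion this hl')
      · obtain ⟨i, hi⟩ := hnear (γ s) (hγG s) hxR
        by_cases hij : i = j
        · subst hij
          exact absurd (hi.trans hDD2) (not_le.mpr hx1)
        · have : setDist (F j) (F i) ≤ D4 := by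
            calc setDist (F j) (F i)
                ≤ EMetric.infEdist (γ s) (F j) + EMetric.infEdist (γ s) (F i) :=
                  setDist_le_add _ _ _
              _ ≤ (Dh + D2) + D := add_le_add hxFj hi
              _ ≤ D4 := by
                  rw [hDh, hD2, hD, hD4, ← ENNReal.ofReal_add (by linarith) (by linarith),
                    ← ENNReal.ofReal_add (by linarith) (by linarith)]
                  exact ENNReal.ofReal_le_ofReal (by linarith)
          exact absurd this (not_le.mpr (hcon i hij).1)
    · -- case 2 : γ t ∈ R l for some l ∈ L
      obtain ⟨l, hlL, htl⟩ := mem_iUnion₂.mp ht2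
      by_cases hxR : γ s ∈ ⋃ i, R i
      · obtain ⟨l', hl'⟩ := mem_iUnion.mp hxR
        have hll : l' ≠ l := by
          rintro rfl
          exact hx2 (mem_biUnion hlL hl')
        -- junction point
        set t' : ℝ := (t : ℝ) with ht'
        set s' : ℝ := (s : ℝ) with hs'
        have hsub01 : uIcc t' s' ⊆ Set.Icc (0:ℝ) 1 :=
          Set.OrdConnected.uIcc_subset Set.ordConnected_Icc t.2 s.2
        have hCconn : IsPreconnected (γ.extend '' uIcc t' s') :=
          isPreconnected_uIcc.image _ (γ.continuous_extend.continuousOn)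
        have hmemt : γ t ∈ γ.extend '' uIcc t' s' :=
          ⟨t', left_mem_uIcc, by rw [Path.extend_apply γ (hsub01 left_mem_uIcc)]⟩
        have hmems : γ s ∈ γ.extend '' uIcc t' s' :=
          ⟨s', right_mem_uIcc, by rw [Path.extend_apply γ (hsub01 right_mem_uIcc)]⟩
        obtain ⟨y, hyC, hyR⟩ := exists_junction R hRcl hRdisj hCconn hll hmemt htl hmems hl'
        obtain ⟨r, hr, hry⟩ := hyC
        have hr01 : r ∈ Set.Icc (0:ℝ) 1 := hsub01 hr
        have hyγ : y = γ ⟨r, hr01⟩ := by rw [← hry, Path.extend_apply γ hr01]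
        have hrdist : dist (⟨r, hr01⟩ : unitInterval) t < δ := by
          rw [Subtype.dist_eq]
          have h1 : dist r t' ≤ dist t' s' := Real.dist_le_of_mem_uIcc hr left_mem_uIcc
          have h2 : dist t' s' = dist s t := by rw [dist_comm, Subtype.dist_eq]
          calc dist r t' ≤ dist t' s' := h1
            _ = dist s t := h2
            _ < δ := hs
        have hyt : edist y (γ t) < Dh := by
          rw [hyγ, hDh, edist_lt_ofReal]
          exact hball hrdist
        have hyG : y ∈ G := by rw [hyγ]; exact hγG _
        obtain ⟨i, hi⟩ := hnear y hyG hyR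
        by_cases hij : i = j
        · -- then γ s close to F j
          subst hij
          have : EMetric.infEdist (γ s) (F i) ≤ D2 := by
            calc EMetric.infEdist (γ s) (F i)
                ≤ edist (γ s) y + EMetric.infEdist y (F i) :=
                  EMetric.infEdist_le_edist_add_infEdist
              _ ≤ (edist (γ s) (γ t) + edist (γ t) y) + D := by
                  gcongr; exact edist_triangle _ _ _
              _ ≤ (Dh + Dh) + D := by
                  gcongr
                  rw [edist_comm]; exact hyt.le
              _ ≤ D2 := by
                  rw [hDh, hD, hD2, ← ENNReal.ofReal_add (by linarith) (by linarith),
                    ← ENNReal.ofReal_add (by linarith) (by linarith)]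
                  exact ENNReal.ofReal_le_ofReal (by linarith)
          exact absurd this (not_le.mpr hx1)
        · have : setDist (F i) (R l) ≤ D4 := by
            calc setDist (F i) (R l)
                ≤ EMetric.infEdist y (F i) + EMetric.infEdist y (R l) :=
                  setDist_le_add _ _ _
              _ ≤ D + (edist y (γ t) + EMetric.infEdist (γ t) (R l)) := by
                  gcongr
                  exact EMetric.infEdist_le_edist_add_infEdist
              _ = D + (edist y (γ t) + 0) := by rw [infEdist_zero_of_mem' htl]
              _ ≤ D + (Dh + 0) := by gcongr
              _ ≤ D4 := by
                  rw [hD, hDh, hD4, add_zero, ← ENNReal.ofReal_add (by linarith) (by linarith)]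
                  exact ENNReal.ofReal_le_ofReal (by linarith)
          exact absurd this (not_le.mpr ((hcon i hij).2 l hlL))
      · -- γ s outside R : near some F i
        obtain ⟨i, hi⟩ := hnear (γ s) (hγG s) hxR
        by_cases hij : i = j
        · subst hij
          exact absurd (hi.trans hDD2) (not_le.mpr hx1)
        · have : setDist (F i) (R l) ≤ D4 := by
            calc setDist (F i) (R l)
                ≤ EMetric.infEdist (γ s) (F i) + EMetric.infEdist (γ s) (R l) :=
                  setDist_le_add _ _ _
              _ ≤ D + (edist (γ s) (γ t) + EMetric.infEdist (γ t) (R l)) := by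
                  gcongr
                  exact EMetric.infEdist_le_edist_add_infEdist
              _ = D + (edist (γ s) (γ t) + 0) := by rw [infEdist_zero_of_mem' htl]
              _ ≤ D + (Dh + 0) := by gcongr
              _ ≤ D4 := by
                  rw [hD, hDh, hD4, add_zero, ← ENNReal.ofReal_add (by linarith) (by linarith)]
                  exact ENNReal.ofReal_le_ofReal (by linarith)
          exact absurd this (not_le.mpr ((hcon i hij).2 l hlL))
  have hA0 : (0 : unitInterval) ∈ A := by
    show γ 0 ∈ W
    rw [γ.source]
    exact Or.inl (by rw [mem_setOf_eq, infEdist_zero_of_mem' ha]; exact zero_le)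
  have hAuniv : A = univ := IsClopen.eq_univ ⟨hAcl, hAopen⟩ ⟨0, hA0⟩
  have hA1 : γ 1 ∈ W := by
    have : (1 : unitInterval) ∈ A := hAuniv ▸ mem_univ _
    exact this
  rw [γ.target] at hA1
  rcases hA1 with h1 | h2
  · rw [mem_setOf_eq] at h1
    have : setDist (F j) (F k0) ≤ D4 := by
      calc setDist (F j) (F k0)
          ≤ EMetric.infEdist b (F j) + EMetric.infEdist b (F k0) := setDist_le_add _ _ _
        _ = EMetric.infEdist b (F j) + 0 := by rw [infEdist_zero_of_mem' hb]
        _ ≤ D2 + 0 := by gcongr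
        _ ≤ D4 := by
            rw [hD2, hD4, add_zero]
            exact ENNReal.ofReal_le_ofReal (by linarith)
    exact absurd this (not_le.mpr (hcon k0 hk0).1)
  · obtain ⟨l, hlL, hbl⟩ := mem_iUnion₂.mp h2
    have : setDist (F k0) (R l) ≤ D4 := by
      calc setDist (F k0) (R l)
          ≤ EMetric.infEdist b (F k0) + EMetric.infEdist b (R l) := setDist_le_add _ _ _
        _ = 0 + 0 := by
            rw [infEdist_zero_of_mem' hb, infEdist_zero_of_mem' hbl]
        _ ≤ D4 := by simp
    exact absurd this (not_le.mpr ((hcon k0 hk0).2 l hlL))
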